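/- For A > 0, the function F(τ₀) = (1 − τ₀)·log(1 + A·τ₀/(1 − τ₀)) is strictly concave on (0, 1). -/

import Mathlib

open Set Real

private lemma strictConcaveOn_congr' {s : Set ℝ} {f g : ℝ → ℝ}
    (h : StrictConcaveOn ℝ s g) (he : Set.EqOn g f s) : StrictConcaveOn ℝ s f := by
  refine ⟨h.1, fun x hx y hy hxy a b ha hb hab => ?_⟩
  rw [← he hx, ← he hy, ← he (h.1 hx hy ha.le hb.le hab)]
  exact h.2 hx hy hxy ha hb hab

theorem stmt_5 (A : ℝ) (hA : 0 < A) :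
    StrictConcaveOn ℝ (Set.Ioo (0 : ℝ) 1)
      (fun τ₀ => (1 - τ₀) * Real.log (1 + A * τ₀ / (1 - τ₀))) := by
  set s : Set ℝ := Set.Ioo (0:ℝ) 1 with hs
  have hsopen : IsOpen s := isOpen_Ioo
  have hconv : Convex ℝ s := convex_Ioo 0 1
  set g : ℝ → ℝ := fun τ => (1 - τ) * (Real.log (1 - τ + A*τ) - Real.log (1 - τ)) with hg
  set g1 : ℝ → ℝ := fun τ => -(Real.log (1 - τ + A*τ) - Real.log (1 - τ))
      + ((A-1)*(1-τ)/(1-τ+A*τ) + 1) with hg1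
  -- basic positivity facts
  have hb : ∀ x ∈ s, 0 < 1 - x + A*x := by
    intro x hx
    have h1 : 0 < 1 - x := by simp [hs] at hx; linarith [hx.2]
    have h2 : 0 < A*x := mul_pos hA (by simp [hs] at hx; linarith [hx.1])
    linarith
  have h1x : ∀ x ∈ s, 0 < 1 - x := by
    intro x hx; simp [hs] at hx; linarith [hx.2]
  -- derivative of g
  have hderivg : ∀ x ∈ s, HasDerivAt g (g1 x) x := by
    intro x hx
    have hbx := hb x hx
    have h1 := h1x x hx
    have hlin : HasDerivAt (fun τ : ℝ => 1 - τ + A*τ) (A - 1) x := by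
      have : HasDerivAt (fun τ : ℝ => 1 - τ + A*τ) (0 - 1 + A*1) x := by
        exact (((hasDerivAt_const x (1:ℝ)).sub (hasDerivAt_id x)).add
          ((hasDerivAt_id x).const_mul A))
      convert this using 1; ring
    have hlog1 : HasDerivAt (fun τ : ℝ => Real.log (1 - τ + A*τ)) ((A-1)/(1-x+A*x)) x := by
      have := (Real.hasDerivAt_log hbx.ne').comp x hlin
      simpa [div_eq_inv_mul, mul_comm, Function.comp_def] using this
    have hlin2 : HasDerivAt (fun τ : ℝ => 1 - τ) (-1) x := by
      simpa [Pi.sub_def] using ((hasDerivAt_const x (1:ℝ)).sub (hasDerivAt_id x))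
    have hlog2 : HasDerivAt (fun τ : ℝ => Real.log (1 - τ)) (-(1/(1-x))) x := by
      have := (Real.hasDerivAt_log h1.ne').comp x hlin2
      simpa [div_eq_inv_mul, Function.comp_def] using this
    have := hlin2.mul (hlog1.sub hlog2)
    refine this.congr_deriv ?_
    simp [hg1]
    field_simp
  -- derivative of g1
  have hderivg1 : ∀ x ∈ s, HasDerivAt g1 (-(A^2/((1-x+A*x)^2*(1-x)))) x := by
    intro x hx
    have hbx := hb x hx
    have h1 := h1x x hx
    have hlin : HasDerivAt (fun τ : ℝ => 1 - τ + A*τ) (A - 1) x := by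
      have : HasDerivAt (fun τ : ℝ => 1 - τ + A*τ) (0 - 1 + A*1) x := by
        exact (((hasDerivAt_const x (1:ℝ)).sub (hasDerivAt_id x)).add
          ((hasDerivAt_id x).const_mul A))
      convert this using 1; ring
    have hlog1 : HasDerivAt (fun τ : ℝ => Real.log (1 - τ + A*τ)) ((A-1)/(1-x+A*x)) x := by
      have := (Real.hasDerivAt_log hbx.ne').comp x hlin
      simpa [div_eq_inv_mul, mul_comm, Function.comp_def] using this
    have hlin2 : HasDerivAt (fun τ : ℝ => 1 - τ) (-1) x := by
      simpa [Pi.sub_def] using ((hasDerivAt_const x (1:ℝ)).sub (hasDerivAt_id x))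
    have hlog2 : HasDerivAt (fun τ : ℝ => Real.log (1 - τ)) (-(1/(1-x))) x := by
      have := (Real.hasDerivAt_log h1.ne').comp x hlin2
      simpa [div_eq_inv_mul, Function.comp_def] using this
    have hnum : HasDerivAt (fun τ : ℝ => (A-1)*(1-τ)) (-(A-1)) x := by
      simpa using hlin2.const_mul (A-1)
    have hquot : HasDerivAt (fun τ : ℝ => (A-1)*(1-τ)/(1-τ+A*τ))
        ((-(A-1)*(1-x+A*x) - (A-1)*(1-x)*(A-1)) / (1-x+A*x)^2) x :=
      hnum.div hlin hbx.ne'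
    have := ((hlog1.sub hlog2).neg).add (hquot.add (hasDerivAt_const x (1:ℝ)))
    refine this.congr_deriv ?_
    field_simp
    ring
  -- g is strictly concave on s
  have hcontg : ContinuousOn g s := fun x hx =>
    ((hderivg x hx).continuousAt).continuousWithinAt
  have hcontg1 : ContinuousOn g1 s := fun x hx =>
    ((hderivg1 x hx).continuousAt).continuousWithinAt
  have hint : interior s = s := hsopen.interior_eq
  have hanti : StrictAntiOn g1 s := by
    refine strictAntiOn_of_deriv_neg hconv hcontg1 ?_
    intro x hx
    rw [hint] at hx
    rw [(hderivg1 x hx).deriv]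
    have hbx := hb x hx
    have h1 := h1x x hx
    have : 0 < A^2/((1-x+A*x)^2*(1-x)) :=
      div_pos (pow_pos hA 2) (mul_pos (pow_pos hbx 2) h1)
    linarith
  have hgconc : StrictConcaveOn ℝ s g := by
    refine StrictAntiOn.strictConcaveOn_of_deriv hconv hcontg ?_
    rw [hint]
    intro x hx y hy hxy
    rw [(hderivg x hx).deriv, (hderivg y hy).deriv]
    exact hanti hx hy hxy
  -- transfer to f
  refine strictConcaveOn_congr' hgconc ?_
  intro x hx
  have hbx := hb x hx
  have h1 := h1x x hx
  simp only [hg]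
  rw [show (1:ℝ) + A * x / (1 - x) = (1 - x + A*x)/(1-x) by field_simp,
    Real.log_div hbx.ne' h1.ne']
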